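/- For any L, R > 0, h > 0, N ∈ ℕ, d ∈ ℕ, define φ₁(x) = (LR/(2Nh+1))‖x‖ − LR²/(2(2Nh+1)²) if ‖x‖ ≥ R/(2Nh+1), and φ₁(x) = (L/2)‖x‖² if ‖x‖ < R/(2Nh+1). Then φ₁ is convex, continuously differentiable with L-Lipschitz gradient, has minimal value 0 attained at 0, and applying the gradient method x_{i+1} = x_i − (h/L)∇φ₁(x_i) from x₀ = Rν (ν a unit vector) yields φ₁(x_N) − min φ₁ = LR²/(4Nh+2). -/

import Mathlib

/-- The worst-case function φ₁ for the gradient method: the Moreau envelope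
of x ↦ (LR/(2Nh+1))‖x‖. -/
noncomputable def phi1 (d : ℕ) (L R h : ℝ) (N : ℕ)
    (x : EuclideanSpace ℝ (Fin d)) : ℝ :=
  if R / (2 * N * h + 1) ≤ ‖x‖ then
    L * R / (2 * N * h + 1) * ‖x‖ - L * R ^ 2 / (2 * (2 * N * h + 1) ^ 2)
  else L / 2 * ‖x‖ ^ 2

open Filter Asymptotics

section Aux

variable {F : Type*} [NormedAddCommGroup F] [InnerProductSpace ℝ F] [CompleteSpace F]

local notation "⟪" x ", " y "⟫" => @inner ℝ _ _ x y

/-- The 1-D Huber-type function. -/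
noncomputable def huberFn (L c t : ℝ) : ℝ := L / 2 * t ^ 2 - L / 2 * (max (t - c) 0) ^ 2

lemma sub_sq_isLittleO (c : ℝ) : (fun s : ℝ => (s - c) ^ 2) =o[nhds c] (fun s => s - c) := by
  have h1 : Tendsto (fun s : ℝ => s - c) (nhds c) (nhds (c - c)) :=
    (continuous_id.sub continuous_const).tendsto c
  rw [sub_self] at h1
  have h2 : (fun s : ℝ => s - c) =o[nhds c] (fun _ => (1 : ℝ)) := (isLittleO_one_iff ℝ).mpr h1
  have h3 := h2.mul_isBigO (isBigO_refl (fun s : ℝ => s - c) (nhds c))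
  simpa [pow_two] using h3

lemma huberFn_hasDerivAt (L : ℝ) {c : ℝ} (hc : 0 < c) (hL : 0 < L) (t : ℝ) :
    HasDerivAt (huberFn L c) (L * min t c) t := by
  rcases lt_trichotomy t c with ht | ht | ht
  · -- t < c : huberFn = L/2 * s^2 near t
    have hd : HasDerivAt (fun s : ℝ => L / 2 * s ^ 2) (L * min t c) t := by
      have := (hasDerivAt_pow 2 t).const_mul (L / 2)
      refine this.congr_deriv ?_
      rw [min_eq_left ht.le]; push_cast; ring
    apply hd.congr_of_eventuallyEq
    filter_upwards [Iio_mem_nhds ht] with s hs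
    rw [Set.mem_Iio] at hs
    simp only [huberFn, max_eq_right (by linarith : s - c ≤ 0)]
    ring
  · -- t = c : squeeze
    rw [ht, min_self, hasDerivAt_iff_isLittleO]
    have hb : (fun s : ℝ => huberFn L c s - huberFn L c c - (s - c) • (L * c))
        =O[nhds c] (fun s => (s - c) ^ 2) := by
      apply IsBigO.of_bound (L / 2)
      filter_upwards with s
      have h0 : huberFn L c c = L / 2 * c ^ 2 := by
        simp [huberFn, max_eq_right (by linarith : c - c ≤ 0)]
      rw [Real.norm_eq_abs, Real.norm_eq_abs, smul_eq_mul]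
      rcases le_total s c with hs | hs
      · have hhs : huberFn L c s = L / 2 * s ^ 2 := by
          simp [huberFn, max_eq_right (by linarith : s - c ≤ 0)]
        rw [hhs, h0]
        have he : L / 2 * s ^ 2 - L / 2 * c ^ 2 - (s - c) * (L * c) = L / 2 * (s - c) ^ 2 := by
          ring
        rw [he, abs_of_nonneg (by positivity), abs_of_nonneg (by positivity)]
      · have hhs : huberFn L c s = L / 2 * s ^ 2 - L / 2 * (s - c) ^ 2 := by
          simp [huberFn, max_eq_left (by linarith : 0 ≤ s - c)]
        rw [hhs, h0]
        have he : L / 2 * s ^ 2 - L / 2 * (s - c) ^ 2 - L / 2 * c ^ 2 - (s - c) * (L * c) = 0 := by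
          ring
        rw [he, abs_zero]
        positivity
    exact hb.trans_isLittleO (sub_sq_isLittleO c)
  · -- t > c
    have hd : HasDerivAt (fun s : ℝ => L / 2 * s ^ 2 - L / 2 * (s - c) ^ 2) (L * min t c) t := by
      have h1 := (hasDerivAt_pow 2 t).const_mul (L / 2)
      have h2 := (((hasDerivAt_id t).sub_const c).pow 2).const_mul (L / 2)
      have h3 := h1.sub h2
      refine h3.congr_deriv ?_
      rw [min_eq_right ht.le]; push_cast; simp only [id_eq]; ring
    apply hd.congr_of_eventuallyEq
    filter_upwards [Ioi_mem_nhds ht] with s hs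
    rw [Set.mem_Ioi] at hs
    simp only [huberFn, max_eq_left (by linarith : 0 ≤ s - c)]

lemma huberFn_deriv (L : ℝ) {c : ℝ} (hc : 0 < c) (hL : 0 < L) :
    deriv (huberFn L c) = fun t => L * min t c :=
  funext fun t => (huberFn_hasDerivAt L hc hL t).deriv

lemma huberFn_convexOn (L : ℝ) {c : ℝ} (hc : 0 < c) (hL : 0 < L) :
    ConvexOn ℝ Set.univ (huberFn L c) := by
  have hdiff : Differentiable ℝ (huberFn L c) :=
    fun t => (huberFn_hasDerivAt L hc hL t).differentiableAt
  apply MonotoneOn.convexOn_of_deriv convex_univ hdiff.continuous.continuousOn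
    hdiff.differentiableOn
  rw [interior_univ, huberFn_deriv L hc hL]
  intro a _ b _ hab
  exact mul_le_mul_of_nonneg_left (min_le_min hab le_rfl) hL.le

lemma huberFn_monotoneOn (L : ℝ) {c : ℝ} (hc : 0 < c) (hL : 0 < L) :
    MonotoneOn (huberFn L c) (Set.Ici 0) := by
  have hdiff : Differentiable ℝ (huberFn L c) :=
    fun t => (huberFn_hasDerivAt L hc hL t).differentiableAt
  apply monotoneOn_of_deriv_nonneg (convex_Ici 0) hdiff.continuous.continuousOn
    hdiff.differentiableOn
  intro t ht
  rw [interior_Ici, Set.mem_Ioi] at ht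
  rw [huberFn_deriv L hc hL]
  have : 0 < min t c := lt_min ht hc
  positivity

lemma normsub_sq_isLittleO (x : F) :
    (fun y : F => ‖y - x‖ ^ 2) =o[nhds x] (fun y => y - x) := by
  have h1 : Tendsto (fun y : F => ‖y - x‖) (nhds x) (nhds 0) := by
    have h : Tendsto (fun y : F => y - x) (nhds x) (nhds (x - x)) :=
      (continuous_id.sub continuous_const).tendsto x
    rw [sub_self] at h
    simpa using h.norm
  have h2 : (fun y : F => ‖y - x‖) =o[nhds x] (fun _ => (1 : ℝ)) := (isLittleO_one_iff ℝ).mpr h1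
  have h3 := h2.mul_isBigO (isBigO_refl (fun y : F => ‖y - x‖) (nhds x))
  have h4 : (fun y : F => ‖y - x‖ * ‖y - x‖) =o[nhds x] (fun y => (1 : ℝ) * ‖y - x‖) := h3
  rw [← isLittleO_norm_right]
  simpa [pow_two] using h4

lemma hasGradientAt_const_mul_normSq (a : ℝ) (x : F) :
    HasGradientAt (fun y : F => a * ‖y‖ ^ 2) ((2 * a) • x) x := by
  rw [hasGradientAt_iff_isLittleO]
  have heq : (fun y : F => a * ‖y‖ ^ 2 - a * ‖x‖ ^ 2 - ⟪(2 * a) • x, y - x⟫)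
      = fun y => a * ‖y - x‖ ^ 2 := by
    funext y
    rw [real_inner_smul_left, inner_sub_right, @norm_sub_sq_real F _ _ y x,
      real_inner_self_eq_norm_sq, real_inner_comm]
    ring
  rw [heq]
  exact ((normsub_sq_isLittleO x).const_mul_left a)

lemma hasFDerivAt_norm' {x : F} (hx : x ≠ 0) :
    HasFDerivAt (fun y : F => ‖y‖) (‖x‖⁻¹ • (innerSL ℝ x : F →L[ℝ] ℝ)) x := by
  have h1 : HasFDerivAt (fun y : F => ⟪y, y⟫) ((2 : ℝ) • (innerSL ℝ x : F →L[ℝ] ℝ)) x := by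
    have h := (hasFDerivAt_id x).inner ℝ (hasFDerivAt_id x)
    refine h.congr_fderiv ?_
    ext v
    simp [real_inner_comm]
    ring
  have hxx : (0 : ℝ) < ⟪x, x⟫ := by
    rw [real_inner_self_eq_norm_sq]
    have := norm_pos_iff.mpr hx
    positivity
  have h2 : HasDerivAt Real.sqrt (1 / (2 * Real.sqrt ⟪x, x⟫)) ⟪x, x⟫ :=
    Real.hasDerivAt_sqrt hxx.ne'
  have h3 := HasDerivAt.comp_hasFDerivAt (f := fun y : F => ⟪y, y⟫) x h2 h1
  have hfun : (Real.sqrt ∘ fun y : F => ⟪y, y⟫) = fun y : F => ‖y‖ := by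
    funext y
    simp [Function.comp, real_inner_self_eq_norm_sq, Real.sqrt_sq (norm_nonneg y)]
  rw [hfun] at h3
  refine h3.congr_fderiv ?_
  have hs : Real.sqrt ⟪x, x⟫ = ‖x‖ := by
    rw [real_inner_self_eq_norm_sq, Real.sqrt_sq (norm_nonneg x)]
  rw [hs, smul_smul]
  congr 1
  have : ‖x‖ ≠ 0 := norm_ne_zero_iff.mpr hx
  field_simp

lemma proj_nonexpansive {c : ℝ} (hc : 0 < c) (y z : F) :
    ‖(if ‖y‖ ≤ c then y else (c / ‖y‖) • y) - (if ‖z‖ ≤ c then z else (c / ‖z‖) • z)‖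
      ≤ ‖y - z‖ := by
  -- reduce to the nonzero case
  by_cases hy0 : y = 0
  · subst hy0
    simp only [norm_zero, hc.le, if_pos]
    by_cases hz0 : z = 0
    · subst hz0; simp
    split_ifs with hz
    · simp
    · push_neg at hz
      have hz' : 0 < ‖z‖ := norm_pos_iff.mpr hz0
      rw [zero_sub, zero_sub, norm_neg, norm_neg, norm_smul, Real.norm_eq_abs,
        abs_of_nonneg (by positivity), div_mul_cancel₀ _ hz'.ne']
      linarith
  by_cases hz0 : z = 0
  · subst hz0
    simp only [norm_zero, hc.le, if_pos]
    split_ifs with hy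
    · exact le_rfl
    · push_neg at hy
      have hy' : 0 < ‖y‖ := norm_pos_iff.mpr hy0
      rw [sub_zero, sub_zero, norm_smul, Real.norm_eq_abs,
        abs_of_nonneg (by positivity), div_mul_cancel₀ _ hy'.ne']
      linarith
  · have hs : 0 < ‖y‖ := norm_pos_iff.mpr hy0
    have ht : 0 < ‖z‖ := norm_pos_iff.mpr hz0
    set s := ‖y‖ with hsdef
    set t := ‖z‖ with htdef
    set u := min s c with hudef
    set v := min t c with hvdef
    have hu : 0 < u := lt_min hs hc
    have hv : 0 < v := lt_min ht hc
    have hus : u ≤ s := min_le_left _ _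
    have hvt : v ≤ t := min_le_left _ _
    have hPy : (if ‖y‖ ≤ c then y else (c / ‖y‖) • y) = (u / s) • y := by
      split_ifs with hyc
      · rw [hudef, min_eq_left hyc, div_self hs.ne', one_smul]
      · push_neg at hyc
        rw [hudef, min_eq_right hyc.le]
    have hPz : (if ‖z‖ ≤ c then z else (c / ‖z‖) • z) = (v / t) • z := by
      split_ifs with hzc
      · rw [hvdef, min_eq_left hzc, div_self ht.ne', one_smul]
      · push_neg at hzc
        rw [hvdef, min_eq_right hzc.le]
    rw [hPy, hPz]
    have hsq : ‖(u / s) • y - (v / t) • z‖ ^ 2 ≤ ‖y - z‖ ^ 2 := by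
      rw [@norm_sub_sq_real F _ _ ((u / s) • y) ((v / t) • z),
        @norm_sub_sq_real F _ _ y z]
      rw [norm_smul, norm_smul, Real.norm_eq_abs, Real.norm_eq_abs,
        abs_of_nonneg (by positivity), abs_of_nonneg (by positivity),
        real_inner_smul_left, real_inner_smul_right]
      rw [← hsdef, ← htdef, div_mul_cancel₀ _ hs.ne', div_mul_cancel₀ _ ht.ne']
      set p := ⟪y, z⟫ with hpdef
      have hp : p ≤ s * t := real_inner_le_norm y z
      have h1 : (u - v) ^ 2 ≤ (s - t) ^ 2 := by
        rw [hudef, hvdef]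
        rcases le_total s c with h | h <;> rcases le_total t c with h' | h' <;>
          simp [min_eq_left, min_eq_right, h, h'] <;> nlinarith
      have h2 : 2 * s * t - 2 * u * v ≤ s ^ 2 + t ^ 2 - u ^ 2 - v ^ 2 := by nlinarith [h1]
      have hw : 0 ≤ s * t - u * v := by nlinarith
      have hq : p * (s * t - u * v) ≤ (s * t) * (s * t - u * v) :=
        mul_le_mul_of_nonneg_right hp hw
      have h3 : p - (s * t - u * v) ≤ (u / s) * ((v / t) * p) := by
        have e1 : (u / s) * ((v / t) * p) = (u * v * p) / (s * t) := by
          field_simp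
        rw [e1, le_div_iff₀ (by positivity)]
        nlinarith [hq]
      linarith [h2, h3]
    have h4 : 0 ≤ ‖(u / s) • y - (v / t) • z‖ := norm_nonneg _
    have h5 : 0 ≤ ‖y - z‖ := norm_nonneg _
    nlinarith [hsq, h4, h5]

end Aux
theorem phi1_worst_case
    {d : ℕ} (L R h : ℝ) (N : ℕ) (hL : 0 < L) (hR : 0 < R) (hh : 0 < h)
    (ν : EuclideanSpace ℝ (Fin d)) (hν : ‖ν‖ = 1)
    (x : ℕ → EuclideanSpace ℝ (Fin d)) (hx0 : x 0 = R • ν)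
    (hrec : ∀ i, x (i + 1) = x i - (h / L) • gradient (phi1 d L R h N) (x i)) :
    ConvexOn ℝ Set.univ (phi1 d L R h N) ∧
    Differentiable ℝ (phi1 d L R h N) ∧
    (∀ y z, ‖gradient (phi1 d L R h N) y - gradient (phi1 d L R h N) z‖ ≤ L * ‖y - z‖) ∧
    phi1 d L R h N 0 = 0 ∧
    (∀ y, phi1 d L R h N 0 ≤ phi1 d L R h N y) ∧
    phi1 d L R h N (x N) - phi1 d L R h N 0 = L * R ^ 2 / (4 * N * h + 2) := by
  have hE0 : (0:ℝ) < 2 * N * h + 1 := by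
    have h1 : (0:ℝ) ≤ 2 * N * h := by positivity
    linarith
  set c : ℝ := R / (2 * N * h + 1) with hcdef
  have hc : 0 < c := div_pos hR hE0
  have hcE : c * (2 * N * h + 1) = R := div_mul_cancel₀ _ hE0.ne'
  -- key formula : phi1 is the Huber function of the norm
  have key : ∀ y : EuclideanSpace ℝ (Fin d), phi1 d L R h N y = huberFn L c ‖y‖ := by
    intro y
    simp only [phi1, huberFn, ← hcdef]
    split_ifs with hy
    · rw [max_eq_left (by linarith : (0:ℝ) ≤ ‖y‖ - c), hcdef]
      field_simp
      ring
    · rw [max_eq_right (by push_neg at hy; linarith : ‖y‖ - c ≤ 0)]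
      ring
  -- the gradient everywhere
  have hGrad : ∀ y : EuclideanSpace ℝ (Fin d),
      HasGradientAt (phi1 d L R h N)
        (if ‖y‖ ≤ c then L • y else (L * c / ‖y‖) • y) y := by
    intro y
    rcases lt_or_ge ‖y‖ c with hy | hy
    · rw [if_pos hy.le]
      have h1 := hasGradientAt_const_mul_normSq (L / 2) y
      have h2 : (2 * (L / 2)) = L := by ring
      rw [h2] at h1
      apply h1.congr_of_eventuallyEq
      have hopen : {z : EuclideanSpace ℝ (Fin d) | ‖z‖ < c} ∈ nhds y :=
        (isOpen_lt continuous_norm continuous_const).mem_nhds hy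
      filter_upwards [hopen] with z hz
      rw [key z, huberFn, max_eq_right (by linarith : ‖z‖ - c ≤ 0)]
      ring
    · have hy0 : y ≠ 0 := by
        intro h0; rw [h0, norm_zero] at hy; linarith
      have hD : HasDerivAt (huberFn L c) (L * c) ‖y‖ := by
        have hd := huberFn_hasDerivAt L hc hL ‖y‖
        rwa [min_eq_right hy] at hd
      have hNorm := hasFDerivAt_norm' hy0
      have hcomp := HasDerivAt.comp_hasFDerivAt
        (f := fun w : EuclideanSpace ℝ (Fin d) => ‖w‖) y hD hNorm
      have hphi : phi1 d L R h N =
          (huberFn L c) ∘ (fun w : EuclideanSpace ℝ (Fin d) => ‖w‖) := funext key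
      have hif : (if ‖y‖ ≤ c then L • y else (L * c / ‖y‖) • y)
          = ((L * c) * ‖y‖⁻¹) • y := by
        split_ifs with hyc
        · have he : ‖y‖ = c := le_antisymm hyc hy
          rw [he, mul_inv_cancel_right₀ hc.ne']
        · rw [div_eq_mul_inv]
      have hCLM : InnerProductSpace.toDual ℝ (EuclideanSpace ℝ (Fin d))
            (((L * c) * ‖y‖⁻¹) • y)
          = (L * c) • (‖y‖⁻¹ • (innerSL ℝ y : EuclideanSpace ℝ (Fin d) →L[ℝ] ℝ)) := by
        ext v
        simp [InnerProductSpace.toDual_apply_apply, real_inner_smul_left]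
        ring
      rw [hasGradientAt_iff_hasFDerivAt, hif, hCLM, hphi]
      exact hcomp
  have hgradient_eq : gradient (phi1 d L R h N)
      = fun y => (if ‖y‖ ≤ c then L • y else (L * c / ‖y‖) • y) :=
    funext fun y => (hGrad y).gradient
  -- phi1 0 = 0
  have h40 : phi1 d L R h N 0 = 0 := by
    rw [key, norm_zero, huberFn, max_eq_right (by linarith : (0:ℝ) - c ≤ 0)]
    norm_num
  refine ⟨?_, ?_, ?_, h40, ?_, ?_⟩
  · -- convexity
    refine ⟨convex_univ, fun p _ q _ a b ha hb hab => ?_⟩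
    rw [key, key, key]
    have hn1 : ‖a • p + b • q‖ ≤ a * ‖p‖ + b * ‖q‖ := by
      calc ‖a • p + b • q‖ ≤ ‖a • p‖ + ‖b • q‖ := norm_add_le _ _
        _ = a * ‖p‖ + b * ‖q‖ := by
            rw [norm_smul, norm_smul, Real.norm_eq_abs, Real.norm_eq_abs,
              abs_of_nonneg ha, abs_of_nonneg hb]
    have m1 : huberFn L c ‖a • p + b • q‖ ≤ huberFn L c (a * ‖p‖ + b * ‖q‖) :=
      huberFn_monotoneOn L hc hL (Set.mem_Ici.mpr (norm_nonneg _))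
        (Set.mem_Ici.mpr (by positivity)) hn1
    have m2 := (huberFn_convexOn L hc hL).2 (Set.mem_univ ‖p‖) (Set.mem_univ ‖q‖) ha hb hab
    simp only [smul_eq_mul] at m2 ⊢
    linarith
  · -- differentiability
    exact fun y => (hGrad y).differentiableAt
  · -- Lipschitz gradient
    intro y z
    rw [hgradient_eq]
    simp only
    have hfactor : ∀ w : EuclideanSpace ℝ (Fin d),
        (if ‖w‖ ≤ c then L • w else (L * c / ‖w‖) • w)
          = L • (if ‖w‖ ≤ c then w else (c / ‖w‖) • w) := by
      intro w
      split_ifs with hw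
      · rfl
      · rw [smul_smul, mul_div_assoc]
    rw [hfactor, hfactor, ← smul_sub, norm_smul, Real.norm_eq_abs, abs_of_pos hL]
    exact mul_le_mul_of_nonneg_left (proj_nonexpansive hc y z) hL.le
  · -- minimality
    intro y
    rw [h40, key, huberFn]
    have hm : max (‖y‖ - c) 0 ≤ ‖y‖ :=
      max_le (by linarith) (norm_nonneg y)
    have h0m : (0:ℝ) ≤ max (‖y‖ - c) 0 := le_max_right _ _
    have hsq : (max (‖y‖ - c) 0) ^ 2 ≤ ‖y‖ ^ 2 := pow_le_pow_left₀ h0m hm 2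
    have := mul_le_mul_of_nonneg_left hsq (by positivity : (0:ℝ) ≤ L / 2)
    linarith
  · -- the iterates
    have haux : ∀ i : ℕ, i ≤ N → x i = (R - i * (h * c)) • ν := by
      intro i
      induction i with
      | zero => intro _; simpa using hx0
      | succ n ih =>
        intro hn
        have hn' : n ≤ N := Nat.le_of_succ_le hn
        have hxn := ih hn'
        have hcast : (n:ℝ) ≤ (N:ℝ) := Nat.cast_le.mpr hn'
        have htc : c ≤ R - n * (h * c) := by
          rw [← hcE]
          have h2 : 0 ≤ c * h * (2 * (N:ℝ) - n) := by
            apply mul_nonneg (mul_nonneg hc.le hh.le)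
            linarith
          nlinarith
        have ht0 : 0 < R - n * (h * c) := lt_of_lt_of_le hc htc
        have hnorm : ‖x n‖ = R - n * (h * c) := by
          rw [hxn, norm_smul, hν, mul_one, Real.norm_eq_abs, abs_of_pos ht0]
        have hg : gradient (phi1 d L R h N) (x n) = (L * c) • ν := by
          rw [hgradient_eq]
          simp only
          rw [hnorm, hxn]
          split_ifs with hle
          · have heq : R - n * (h * c) = c := le_antisymm hle htc
            rw [heq, smul_smul]
          · rw [smul_smul, div_mul_cancel₀ _ ht0.ne']
        rw [hrec n, hg, hxn, smul_smul, ← sub_smul]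
        congr 1
        have hLdiv : h / L * (L * c) = h * c := by
          field_simp
        rw [hLdiv]
        push_cast
        ring
    have hxN := haux N le_rfl
    have htcN : c ≤ R - N * (h * c) := by
      rw [← hcE]
      have h2 : 0 ≤ c * h * (N:ℝ) := by positivity
      nlinarith
    have htN0 : 0 < R - N * (h * c) := lt_of_lt_of_le hc htcN
    have hnormN : ‖x N‖ = R - N * (h * c) := by
      rw [hxN, norm_smul, hν, mul_one, Real.norm_eq_abs, abs_of_pos htN0]
    rw [key, hnormN, h40, huberFn, max_eq_left (by linarith)]
    have h42 : (0:ℝ) < 4 * N * h + 2 := by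
      have h1 : (0:ℝ) ≤ 4 * N * h := by positivity
      linarith
    rw [← hcE, eq_div_iff (ne_of_gt h42)]
    ring
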